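/- arXiv:2601.20543 — 2 statements merged into one kernel-verified Lean document; each statement's English description precedes it below -/
import Mathlib

section
/- Let p be an odd prime with p ≡ 3 (mod 4), and let L = ℚ(√(2p), √(-1)). Then the prime p is ramified in ℚ(√(2p)), and the unique prime of ℚ(√(2p)) above p is inert in L. -/
open NumberField Polynomial Module UniqueFactorizationMonoid Ideal

section helpers

lemma sum_helper {ι : Type*} [DecidableEq ι] (T : Finset ι) (g : ι → ℕ)
    (h2 : ∀ P ∈ T, 2 ≤ g P) (hsum : ∑ P ∈ T, g P ≤ 2) {w : ι} (hw : w ∈ T) :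
    T = {w} ∧ g w = 2 := by
  have huniq : ∀ Q ∈ T, Q = w := by
    intro Q hQ
    by_contra hne
    have hsub : ({w, Q} : Finset ι) ⊆ T := by
      intro x hx
      simp only [Finset.mem_insert, Finset.mem_singleton] at hx
      rcases hx with rfl | rfl <;> assumption
    have h4 : 4 ≤ ∑ P ∈ ({w, Q} : Finset ι), g P := by
      rw [Finset.sum_insert (by simpa using (Ne.symm hne)), Finset.sum_singleton]
      have := h2 w hw; have := h2 Q hQ; omega
    have := Finset.sum_le_sum_of_subset hsub (f := g)
    omega
  have hT : T = {w} := Finset.eq_singleton_iff_unique_mem.mpr ⟨hw, huniq⟩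
  refine ⟨hT, ?_⟩
  rw [hT, Finset.sum_singleton] at hsum
  exact le_antisymm hsum (h2 w hw)

lemma dedekind_unique_prime {R S : Type*} [CommRing R] [IsDedekindDomain R] [CommRing S]
    [IsDedekindDomain S] [Algebra R S] (K L : Type*) [Field K] [Field L]
    [Algebra R K] [IsFractionRing R K] [Algebra S L] [IsFractionRing S L] [Algebra K L]
    [Algebra R L] [IsScalarTower R S L] [IsScalarTower R K L] [Module.Finite R S]
    (p : Ideal R) [p.IsMaximal] (hp0 : p ≠ ⊥)
    (hrank : finrank K L ≤ 2)
    (hge : ∀ P : Ideal S, P.IsPrime → map (algebraMap R S) p ≤ P →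
      2 ≤ ramificationIdx' p P * inertiaDeg' p P) :
    ∃ P : Ideal S, P.IsPrime ∧ map (algebraMap R S) p ≤ P ∧
      (∀ Q : Ideal S, Q.IsPrime → map (algebraMap R S) p ≤ Q → Q = P) ∧
      ramificationIdx' p P * inertiaDeg' p P = 2 ∧
      map (algebraMap R S) p = P ^ ramificationIdx' p P := by
  classical
  have hinj : Function.Injective (algebraMap R S) :=
    algebraMap_injective_of_field_isFractionRing R S K L
  have hmap0 : map (algebraMap R S) p ≠ ⊥ := by
    rw [Ne, Ideal.map_eq_bot_iff_of_injective hinj]; exact hp0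
  haveI : Algebra.IsIntegral R S := Algebra.IsIntegral.of_finite R S
  obtain ⟨Q0, hQ0max, hQ0comap⟩ := Ideal.exists_ideal_over_maximal_of_isIntegral p
    (by rw [(RingHom.injective_iff_ker_eq_bot _).mp hinj]; exact bot_le)
  have hQ0prime : Q0.IsPrime := hQ0max.isPrime
  have hQ0le : map (algebraMap R S) p ≤ Q0 := map_le_iff_le_comap.mpr hQ0comap.ge
  set T := (factors (map (algebraMap R S) p)).toFinset with hT
  have hmemT : ∀ Q : Ideal S, Q.IsPrime → map (algebraMap R S) p ≤ Q → Q ∈ T := by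
    intro Q hQp hQle
    rw [hT, Multiset.mem_toFinset, factors_eq_normalizedFactors,
      Ideal.mem_normalizedFactors_iff hmap0]
    exact ⟨hQp, hQle⟩
  have hTmem : ∀ Q ∈ T, Q.IsPrime ∧ map (algebraMap R S) p ≤ Q := by
    intro Q hQ
    rw [hT, Multiset.mem_toFinset, factors_eq_normalizedFactors,
      Ideal.mem_normalizedFactors_iff hmap0] at hQ
    exact hQ
  have hsum := Ideal.sum_ramification_inertia (p := p) (S := S) K L hp0
  obtain ⟨hTsing, hef⟩ := sum_helper T
    (fun P => ramificationIdx' p P * inertiaDeg' p P)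
    (fun P hP => hge P (hTmem P hP).1 (hTmem P hP).2)
    (by exact (le_of_eq hsum).trans hrank) (hmemT Q0 hQ0prime hQ0le)
  have huniq : ∀ Q : Ideal S, Q.IsPrime → map (algebraMap R S) p ≤ Q → Q = Q0 := by
    intro Q h1 h2
    have := hmemT Q h1 h2
    rw [hTsing, Finset.mem_singleton] at this
    exact this
  have hQ0bot : Q0 ≠ ⊥ := fun h => hmap0 (le_bot_iff.mp (h ▸ hQ0le))
  have hall : ∀ b ∈ normalizedFactors (map (algebraMap R S) p), b = Q0 := by
    intro b hb
    rw [Ideal.mem_normalizedFactors_iff hmap0] at hb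
    exact huniq b hb.1 hb.2
  have hrep := Multiset.eq_replicate_card.mpr hall
  have hcount : (normalizedFactors (map (algebraMap R S) p)).count Q0
      = Multiset.card (normalizedFactors (map (algebraMap R S) p)) := by
    rw [hrep]; simp
  have hcnt : ramificationIdx' p Q0
      = Multiset.card (normalizedFactors (map (algebraMap R S) p)) := by
    rw [IsDedekindDomain.ramificationIdx'_eq_normalizedFactors_count hmap0 hQ0prime hQ0bot, hcount]
  have hprodeq : map (algebraMap R S) p = Q0 ^ ramificationIdx' p Q0 := by
    have h1 := UniqueFactorizationMonoid.prod_normalizedFactors hmap0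
    rw [associated_iff_eq] at h1
    rw [← h1, hrep, Multiset.prod_replicate, hcnt]
  exact ⟨Q0, hQ0prime, hQ0le, huniq, hef, hprodeq⟩

lemma quadratic_span {F E : Type*} [Field F] [Field E] [Algebra F E] (γ : E) (c : F)
    (hγ : γ ^ 2 = algebraMap F E c)
    (htop : IntermediateField.adjoin F ({γ} : Set E) = ⊤) :
    Submodule.span F ({1, γ} : Set E) = ⊤ := by
  classical
  set S := Submodule.span F ({1, γ} : Set E) with hS
  have h1S : (1 : E) ∈ S := Submodule.subset_span (by left; rfl)
  have hγS : γ ∈ S := Submodule.subset_span (by right; rfl)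
  by_cases hc : ∃ q : F, algebraMap F E q = γ
  · rw [eq_top_iff]
    intro x _
    have hbot : (⊥ : IntermediateField F E) = ⊤ := by
      rw [← htop]
      symm
      rw [IntermediateField.adjoin_simple_eq_bot_iff]
      exact hc
    have hx : x ∈ (⊥ : IntermediateField F E) := by rw [hbot]; trivial
    obtain ⟨r, hr⟩ := hx
    have : x = algebraMap F E r := hr.symm
    rw [this, Algebra.algebraMap_eq_smul_one]
    exact Submodule.smul_mem _ _ h1S
  · have hkey : ∀ y ∈ S, γ * y ∈ S := by
      intro y hy
      induction hy using Submodule.span_induction with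
      | mem z hz =>
        rcases hz with rfl | rfl
        · simpa using hγS
        · rw [← pow_two, hγ, Algebra.algebraMap_eq_smul_one]
          exact Submodule.smul_mem _ _ h1S
      | zero => simpa using Submodule.zero_mem S
      | add a b _ _ ha hb => rw [mul_add]; exact Submodule.add_mem _ ha hb
      | smul r a _ ha => rw [mul_smul_comm]; exact Submodule.smul_mem _ _ ha
    have hmul : ∀ x ∈ S, ∀ y ∈ S, x * y ∈ S := by
      intro x hx
      induction hx using Submodule.span_induction with
      | mem z hz =>
        rcases hz with rfl | rfl
        · intro y hy; rw [one_mul]; exact hy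
        · exact fun y hy => hkey y hy
      | zero => intro y _; simpa using Submodule.zero_mem S
      | add a b _ _ ha hb => intro y hy; rw [add_mul]; exact Submodule.add_mem _ (ha y hy) (hb y hy)
      | smul r a _ ha => intro y hy; rw [smul_mul_assoc]; exact Submodule.smul_mem _ _ (ha y hy)
    have hconj : ∀ a b : F, (a • (1:E) + b • γ) * (a • (1:E) - b • γ) = (a^2 - c*b^2) • (1:E) := by
      intro a b
      simp only [Algebra.smul_def, mul_one, map_sub, _root_.map_mul, map_pow]
      linear_combination (-(algebraMap F E b ^ 2)) * hγ
    have hinv : ∀ x ∈ S, x⁻¹ ∈ S := by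
      intro x hx
      rcases eq_or_ne x 0 with rfl | hx0
      · simpa using Submodule.zero_mem S
      obtain ⟨a, b, hab⟩ := Submodule.mem_span_pair.mp hx
      set N : F := a^2 - c*b^2 with hN
      have hXN : x * (a • (1:E) - b • γ) = N • (1:E) := by
        rw [← hab]; exact hconj a b
      have hN0 : N ≠ 0 := by
        intro h0
        rw [h0, zero_smul] at hXN
        rcases mul_eq_zero.mp hXN with h | h
        · exact hx0 h
        · have hba : a • (1:E) = b • γ := sub_eq_zero.mp h
          rcases eq_or_ne b 0 with rfl | hb0
          · rw [zero_smul] at hba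
            have ha0 : a = 0 := by
              rcases smul_eq_zero.mp hba with h' | h'
              · exact h'
              · exact absurd h' one_ne_zero
            apply hx0
            rw [← hab, ha0]
            simp
          · exact hc ⟨b⁻¹ * a, by
              rw [Algebra.algebraMap_eq_smul_one, mul_smul, hba, smul_smul,
                inv_mul_cancel₀ hb0, one_smul]⟩
      have hxinv : x⁻¹ = N⁻¹ • (a • (1:E) - b • γ) := by
        apply inv_eq_of_mul_eq_one_right
        rw [mul_smul_comm, hXN, smul_smul, inv_mul_cancel₀ hN0, one_smul]
      rw [hxinv]
      exact Submodule.smul_mem _ _ (Submodule.sub_mem _ (Submodule.smul_mem _ _ h1S)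
        (Submodule.smul_mem _ _ hγS))
    let A : Subalgebra F E := S.toSubalgebra h1S (fun x y hx hy => hmul x hx y hy)
    let E' : IntermediateField F E := A.toIntermediateField hinv
    have hle : IntermediateField.adjoin F ({γ} : Set E) ≤ E' := by
      apply IntermediateField.adjoin_le_iff.mpr
      intro x hx
      rcases hx with rfl
      exact hγS
    rw [htop, top_le_iff] at hle
    rw [eq_top_iff]
    intro x _
    have : x ∈ E' := by rw [hle]; trivial
    exact this

lemma quadratic_finite {F E : Type*} [Field F] [Field E] [Algebra F E] (γ : E) (c : F)
    (hγ : γ ^ 2 = algebraMap F E c)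
    (htop : IntermediateField.adjoin F ({γ} : Set E) = ⊤) :
    Module.Finite F E :=
  ⟨by rw [← quadratic_span γ c hγ htop]
      exact Submodule.fg_span ((Set.finite_singleton γ).insert 1)⟩

lemma quadratic_finrank {F E : Type*} [Field F] [Field E] [Algebra F E] (γ : E) (c : F)
    (hγ : γ ^ 2 = algebraMap F E c)
    (htop : IntermediateField.adjoin F ({γ} : Set E) = ⊤) :
    finrank F E ≤ 2 := by
  classical
  have h := finrank_span_le_card (R := F) ({1, γ} : Set E)
  rw [quadratic_span γ c hγ htop, finrank_top] at h
  refine h.trans ?_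
  have hsub : ({1, γ} : Set E).toFinset ⊆ {1, γ} := by
    intro x hx
    simpa using Set.mem_toFinset.mp hx
  calc ({1, γ} : Set E).toFinset.card ≤ ({1, γ} : Finset E).card := Finset.card_le_card hsub
    _ ≤ 2 := Finset.card_insert_le _ _ |>.trans (by simp)

end helpers

set_option maxHeartbeats 1000000 in
set_option synthInstance.maxHeartbeats 400000 in
/-- For an odd prime `p ≡ 3 (mod 4)` and `L = ℚ(√(2p), √-1)`: the prime `p` is ramified
in `L₀ = ℚ(√(2p))` (unique prime `v` above `p`, with ramification index `2` over `ℤ`),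
and `v` is inert in `L`: `v·𝓞 L` is prime with residue degree `2`. -/
theorem stmt5 (p : ℕ) (hp : p.Prime) (hodd : p % 2 = 1) (hmod : p % 4 = 3)
    (L₀ L : Type) [Field L₀] [Field L] [Algebra ℚ L₀] [Algebra ℚ L]
    [Algebra L₀ L] [IsScalarTower ℚ L₀ L]
    (α : L₀) (hα : α ^ 2 = (2 * p : L₀))
    (hL₀ : IntermediateField.adjoin ℚ ({α} : Set L₀) = ⊤)
    (β : L) (hβ : β ^ 2 = -1)
    (hL : IntermediateField.adjoin ℚ ({algebraMap L₀ L α, β} : Set L) = ⊤) :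
    (∃! v : Ideal (𝓞 L₀), v.IsPrime ∧ (p : 𝓞 L₀) ∈ v) ∧
    ∀ v : Ideal (𝓞 L₀), v.IsPrime → (p : 𝓞 L₀) ∈ v →
      Ideal.ramificationIdx' (Ideal.span {(p : ℤ)}) v = 2 ∧
      (Ideal.map (algebraMap (𝓞 L₀) (𝓞 L)) v).IsPrime ∧
      Ideal.inertiaDeg' v
        (Ideal.map (algebraMap (𝓞 L₀) (𝓞 L)) v) = 2 := by
  classical
  haveI : CharZero L₀ := charZero_of_injective_algebraMap (algebraMap ℚ L₀).injective
  haveI : CharZero L := charZero_of_injective_algebraMap (algebraMap ℚ L).injective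
  -- field-theoretic setup
  have hαQ : α ^ 2 = algebraMap ℚ L₀ (2 * p) := by
    rw [hα, _root_.map_mul, map_ofNat, map_natCast]
  haveI hfd0 : FiniteDimensional ℚ L₀ := quadratic_finite α (2*p) hαQ hL₀
  have hrk₀ : finrank ℚ L₀ ≤ 2 := quadratic_finrank α (2*p) hαQ hL₀
  have hβQ : β ^ 2 = algebraMap L₀ L (-1) := by rw [hβ]; simp
  have hadj : IntermediateField.adjoin L₀ ({β} : Set L) = ⊤ := by
    have h : (⊤ : IntermediateField ℚ L) ≤
        (IntermediateField.adjoin L₀ ({β} : Set L)).restrictScalars ℚ := by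
      rw [← hL]
      apply IntermediateField.adjoin_le_iff.mpr
      rintro x hx
      simp only [Set.mem_insert_iff, Set.mem_singleton_iff] at hx
      rcases hx with rfl | rfl
      · simp only [SetLike.mem_coe, IntermediateField.mem_restrictScalars]
        exact (IntermediateField.adjoin L₀ ({β} : Set L)).algebraMap_mem α
      · simp only [SetLike.mem_coe, IntermediateField.mem_restrictScalars]
        exact IntermediateField.subset_adjoin _ _ rfl
    rw [eq_top_iff]
    intro x _
    rw [← IntermediateField.mem_restrictScalars (K := ℚ)]
    exact h trivial
  haveI hfd1 : FiniteDimensional L₀ L := quadratic_finite β (-1) hβQ hadj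
  have hrk₁ : finrank L₀ L ≤ 2 := quadratic_finrank β (-1) hβQ hadj
  haveI hfdL : FiniteDimensional ℚ L := Module.Finite.trans L₀ L
  haveI : NumberField L₀ :=
    @NumberField.mk L₀ _ ‹_› ((Subsingleton.elim ‹Algebra ℚ L₀› _) ▸ hfd0)
  haveI : NumberField L :=
    @NumberField.mk L _ ‹_› ((Subsingleton.elim ‹Algebra ℚ L› _) ▸ hfdL)
  haveI : Module.Finite (𝓞 L₀) (𝓞 L) := Module.Finite.of_restrictScalars_finite ℤ _ _
  -- integral elements
  have hαintZ : IsIntegral ℤ α := by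
    refine ⟨X ^ 2 - C (2 * (p:ℤ)), monic_X_pow_sub_C _ two_ne_zero, ?_⟩
    rw [← aeval_def, map_sub, map_pow, aeval_X, aeval_C, hα, _root_.map_mul, map_ofNat,
      map_natCast, sub_self]
  have hβintZ : IsIntegral ℤ β := by
    refine ⟨X ^ 2 - C (-1 : ℤ), monic_X_pow_sub_C _ two_ne_zero, ?_⟩
    rw [← aeval_def, map_sub, map_pow, aeval_X, aeval_C, hβ, map_neg, map_one, sub_self]
  set π : 𝓞 L₀ := ⟨α, hαintZ⟩ with hπdef
  set βO : 𝓞 L := ⟨β, hβintZ⟩ with hβOdef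
  have hππ : π * π = 2 * (p : 𝓞 L₀) := by
    apply RingOfIntegers.ext
    simp only [RingOfIntegers.coe_eq_algebraMap, _root_.map_mul, map_ofNat, map_natCast]
    show α * α = 2 * (p : L₀)
    rw [← pow_two, hα]
  have hβOβO : βO * βO = -1 := by
    apply RingOfIntegers.ext
    simp only [RingOfIntegers.coe_eq_algebraMap, _root_.map_mul, map_neg, map_one]
    show β * β = -1
    rw [← pow_two, hβ]
  -- the ideal I with I² = (p)
  set I : Ideal (𝓞 L₀) := Ideal.span {π, (p : 𝓞 L₀)} with hIdef
  have hπI : π ∈ I := Ideal.subset_span (Set.mem_insert _ _)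
  have hpI : (p : 𝓞 L₀) ∈ I := Ideal.subset_span (Set.mem_insert_of_mem _ rfl)
  have hI2 : I ^ 2 = Ideal.span {(p : 𝓞 L₀)} := by
    apply le_antisymm
    · rw [pow_two]
      refine Ideal.mul_le.mpr ?_
      intro r hr s hs
      obtain ⟨a, b, hab⟩ := Ideal.mem_span_pair.mp hr
      obtain ⟨c, d, hcd⟩ := Ideal.mem_span_pair.mp hs
      rw [Ideal.mem_span_singleton]
      refine ⟨2*a*c + a*d*π + b*c*π + b*d*p, ?_⟩
      rw [← hab, ← hcd]
      linear_combination (a*c) * hππ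
    · rw [Ideal.span_singleton_le_iff_mem]
      have hk2 : p = 2 * (p / 2) + 1 := by omega
      have hpc : (p : 𝓞 L₀) = 2*((p/2 : ℕ) : 𝓞 L₀)+1 := by exact_mod_cast congrArg Nat.cast hk2
      have hmain : (p : 𝓞 L₀) = (p : 𝓞 L₀)*(p : 𝓞 L₀) - ((p/2 : ℕ) : 𝓞 L₀)*(π*π) := by
        linear_combination ((p/2 : ℕ) : 𝓞 L₀) * hππ - (p : 𝓞 L₀) * hpc
      rw [pow_two, hmain]
      exact Ideal.sub_mem _ (Ideal.mul_mem_mul hpI hpI)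
        (Ideal.mul_mem_left _ _ (Ideal.mul_mem_mul hπI hπI))
  -- basic nonvanishing
  have hp0O : (p : 𝓞 L₀) ≠ 0 := Nat.cast_ne_zero.mpr hp.ne_zero
  have hspan : map (algebraMap ℤ (𝓞 L₀)) (Ideal.span {(p:ℤ)}) = Ideal.span {(p : 𝓞 L₀)} := by
    rw [Ideal.map_span, Set.image_singleton, map_natCast]
  have hspan0 : Ideal.span {(p : 𝓞 L₀)} ≠ ⊥ := by
    rw [Ne, Ideal.span_singleton_eq_bot]
    exact hp0O
  have hmap0 : map (algebraMap ℤ (𝓞 L₀)) (Ideal.span {(p:ℤ)}) ≠ ⊥ := by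
    rw [hspan]; exact hspan0
  have hI0 : I ≠ ⊥ := by
    intro h
    apply hspan0
    rw [← hI2, h]
    exact le_antisymm (Ideal.pow_le_self two_ne_zero) bot_le
  have hpZprime : Prime ((p:ℕ) : ℤ) := Nat.prime_iff_prime_int.mp hp
  haveI hmaxZ : (Ideal.span {((p:ℕ):ℤ)}).IsMaximal :=
    PrincipalIdealRing.isMaximal_of_irreducible hpZprime.irreducible
  have hspanZ0 : Ideal.span {((p:ℕ):ℤ)} ≠ ⊥ := by
    rw [Ne, Ideal.span_singleton_eq_bot]
    exact_mod_cast hp.ne_zero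
  -- ramification indices over p are even and nonzero
  have he2 : ∀ P : Ideal (𝓞 L₀), P.IsPrime → map (algebraMap ℤ (𝓞 L₀)) (Ideal.span {(p:ℤ)}) ≤ P →
      2 ∣ ramificationIdx' (Ideal.span {(p:ℤ)}) P ∧
      ramificationIdx' (Ideal.span {(p:ℤ)}) P ≠ 0 := by
    intro P hP hle
    have hP0 : P ≠ ⊥ := fun h => hmap0 (le_bot_iff.mp (h ▸ hle))
    constructor
    · rw [IsDedekindDomain.ramificationIdx'_eq_normalizedFactors_count hmap0 hP hP0, hspan, ← hI2,
        normalizedFactors_pow, Multiset.count_nsmul]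
      exact Dvd.intro _ rfl
    · exact IsDedekindDomain.ramificationIdx_ne_zero hmap0 hP hle
  have hge1 : ∀ P : Ideal (𝓞 L₀), P.IsPrime → map (algebraMap ℤ (𝓞 L₀)) (Ideal.span {(p:ℤ)}) ≤ P →
      2 ≤ ramificationIdx' (Ideal.span {(p:ℤ)}) P *
        inertiaDeg' (Ideal.span {(p:ℤ)}) P := by
    intro P hP hle
    obtain ⟨hdvd, hne⟩ := he2 P hP hle
    have hee : 2 ≤ ramificationIdx' (Ideal.span {(p:ℤ)}) P :=
      Nat.le_of_dvd (Nat.pos_of_ne_zero hne) hdvd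
    haveI : P.LiesOver (Ideal.span {((p:ℕ):ℤ)}) :=
      ⟨(hmaxZ.eq_of_le (comap_ne_top _ hP.ne_top) (map_le_iff_le_comap.mp hle))⟩
    have hf := Ideal.inertiaDeg'_pos (Ideal.span {((p:ℕ):ℤ)}) P
    calc 2 ≤ ramificationIdx' (Ideal.span {(p:ℤ)}) P := hee
      _ ≤ _ := Nat.le_mul_of_pos_right _ hf
  obtain ⟨v0, hv0prime, hv0le, hv0uniq, hv0ef, hv0eq⟩ :=
    dedekind_unique_prime ℚ L₀ (Ideal.span {((p:ℕ):ℤ)}) hspanZ0 hrk₀ hge1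
  -- e = 2, f = 1 at v0
  obtain ⟨hveven, hvne⟩ := he2 v0 hv0prime hv0le
  have hev0 : ramificationIdx' (Ideal.span {(p:ℤ)}) v0 = 2 := by
    have hd : ramificationIdx' (Ideal.span {(p:ℤ)}) v0 ∣ 2 :=
      ⟨_, hv0ef.symm⟩
    have h1 := Nat.le_of_dvd two_pos hd
    have h2 := Nat.le_of_dvd (Nat.pos_of_ne_zero hvne) hveven
    omega
  have hfv0 : inertiaDeg' (Ideal.span {(p:ℤ)}) v0 = 1 := by
    rw [hev0] at hv0ef
    omega
  have hmem_iff : ∀ Q : Ideal (𝓞 L₀),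
      map (algebraMap ℤ (𝓞 L₀)) (Ideal.span {(p:ℤ)}) ≤ Q ↔ (p : 𝓞 L₀) ∈ Q := by
    intro Q
    rw [hspan, Ideal.span_singleton_le_iff_mem]
  have hv0mem : (p : 𝓞 L₀) ∈ v0 := (hmem_iff v0).mp hv0le
  have hv0bot : v0 ≠ ⊥ := by
    intro h
    rw [h] at hv0mem
    exact hp0O hv0mem
  haveI hv0max : v0.IsMaximal := Ring.DimensionLEOne.maximalOfPrime hv0bot hv0prime
  haveI : v0.LiesOver (Ideal.span {((p:ℕ):ℤ)}) :=
    ⟨(hmaxZ.eq_of_le (comap_ne_top _ hv0prime.ne_top) (map_le_iff_le_comap.mp hv0le))⟩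
  -- -1 is not a square in the residue field of v0
  have hns : ¬ IsSquare (-1 : 𝓞 L₀ ⧸ v0) := by
    haveI : Fact p.Prime := ⟨hp⟩
    have hf1' : finrank (ℤ ⧸ Ideal.span {((p:ℕ):ℤ)}) (𝓞 L₀ ⧸ v0) = 1 := by
      rw [← Ideal.inertiaDeg_algebraMap]
      exact hfv0
    letI : Field (ℤ ⧸ Ideal.span {((p:ℕ):ℤ)}) := Ideal.Quotient.field _
    letI : Field (𝓞 L₀ ⧸ v0) := Ideal.Quotient.field _
    have hsurj1 : Function.Surjective
        (algebraMap (ℤ ⧸ Ideal.span {((p:ℕ):ℤ)}) (𝓞 L₀ ⧸ v0)) := by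
      have hb := Subalgebra.bot_eq_top_iff_finrank_eq_one.mpr hf1'
      intro x
      have hx : x ∈ (⊥ : Subalgebra (ℤ ⧸ Ideal.span {((p:ℕ):ℤ)}) (𝓞 L₀ ⧸ v0)) := by
        rw [hb]; trivial
      exact Algebra.mem_bot.mp hx
    rintro ⟨x, hx⟩
    obtain ⟨y, rfl⟩ := hsurj1 x
    have hy : y * y = -1 := by
      have hinj : Function.Injective
          (algebraMap (ℤ ⧸ Ideal.span {((p:ℕ):ℤ)}) (𝓞 L₀ ⧸ v0)) := RingHom.injective _
      apply hinj
      rw [_root_.map_mul, ← hx, map_neg, map_one]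
    -- transfer to ZMod p
    have hker : ∀ a ∈ Ideal.span {((p:ℕ):ℤ)}, Int.castRingHom (ZMod p) a = 0 := by
      intro a ha
      rw [Ideal.mem_span_singleton] at ha
      simpa [ZMod.intCast_zmod_eq_zero_iff_dvd] using ha
    let φ : ℤ ⧸ Ideal.span {((p:ℕ):ℤ)} →+* ZMod p :=
      Ideal.Quotient.lift _ (Int.castRingHom (ZMod p)) hker
    have hzsq : IsSquare (-1 : ZMod p) := by
      refine ⟨φ y, ?_⟩
      rw [← _root_.map_mul, hy, map_neg, map_one]
    exact ZMod.exists_sq_eq_neg_one_iff.mp hzsq hmod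
  -- the extension 𝓞 L₀ → 𝓞 L
  have hinj2 : Function.Injective (algebraMap (𝓞 L₀) (𝓞 L)) :=
    algebraMap_injective_of_field_isFractionRing (𝓞 L₀) (𝓞 L) L₀ L
  have hmapv0 : map (algebraMap (𝓞 L₀) (𝓞 L)) v0 ≠ ⊥ := by
    rw [Ne, Ideal.map_eq_bot_iff_of_injective hinj2]
    exact hv0bot
  have hfge2 : ∀ P : Ideal (𝓞 L), P.IsPrime → map (algebraMap (𝓞 L₀) (𝓞 L)) v0 ≤ P →
      2 ≤ inertiaDeg' v0 P := by
    intro P hP hle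
    have hP0 : P ≠ ⊥ := fun h => hmapv0 (le_bot_iff.mp (h ▸ hle))
    haveI : P.LiesOver v0 :=
      ⟨(hv0max.eq_of_le (comap_ne_top _ hP.ne_top) (map_le_iff_le_comap.mp hle))⟩
    have hpos := Ideal.inertiaDeg'_pos v0 P
    by_contra hlt
    have hfeq : inertiaDeg' v0 P = 1 := by omega
    rw [Ideal.inertiaDeg_algebraMap] at hfeq
    haveI : P.IsMaximal := Ring.DimensionLEOne.maximalOfPrime hP0 hP
    letI : Field (𝓞 L₀ ⧸ v0) := Ideal.Quotient.field _
    letI : Field (𝓞 L ⧸ P) := Ideal.Quotient.field _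
    have hsurj2 : Function.Surjective (algebraMap (𝓞 L₀ ⧸ v0) (𝓞 L ⧸ P)) := by
      have hb := Subalgebra.bot_eq_top_iff_finrank_eq_one.mpr hfeq
      intro x
      have hx : x ∈ (⊥ : Subalgebra (𝓞 L₀ ⧸ v0) (𝓞 L ⧸ P)) := by rw [hb]; trivial
      exact Algebra.mem_bot.mp hx
    have hsq : IsSquare (-1 : 𝓞 L ⧸ P) := by
      refine ⟨Ideal.Quotient.mk P βO, ?_⟩
      rw [← _root_.map_mul, hβOβO, map_neg, map_one]
    obtain ⟨s, hs⟩ := hsq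
    obtain ⟨t, rfl⟩ := hsurj2 s
    apply hns
    refine ⟨t, ?_⟩
    have hinj3 : Function.Injective (algebraMap (𝓞 L₀ ⧸ v0) (𝓞 L ⧸ P)) := RingHom.injective _
    apply hinj3
    rw [_root_.map_mul, ← hs, map_neg, map_one]
  have hge2 : ∀ P : Ideal (𝓞 L), P.IsPrime → map (algebraMap (𝓞 L₀) (𝓞 L)) v0 ≤ P →
      2 ≤ ramificationIdx' v0 P *
        inertiaDeg' v0 P := by
    intro P h1 h2
    have hfge := hfge2 P h1 h2
    have hene := IsDedekindDomain.ramificationIdx_ne_zero hmapv0 h1 h2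
    calc 2 ≤ inertiaDeg' v0 P := hfge
      _ ≤ _ := Nat.le_mul_of_pos_left _ (Nat.pos_of_ne_zero hene)
  obtain ⟨w0, hw0prime, hw0le, hw0uniq, hw0ef, hw0eq⟩ :=
    dedekind_unique_prime L₀ L v0 hv0bot hrk₁ hge2
  have hfw : 2 ≤ inertiaDeg' v0 w0 := hfge2 w0 hw0prime hw0le
  have hew : ramificationIdx' v0 w0 = 1 := by
    by_contra hne1
    have he0 : ramificationIdx' v0 w0 ≠ 0 := by
      intro h
      rw [h, zero_mul] at hw0ef
      omega
    have he2' : 2 ≤ ramificationIdx' v0 w0 := by omega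
    have := Nat.mul_le_mul he2' hfw
    omega
  have hfw2 : inertiaDeg' v0 w0 = 2 := by
    rw [hew, one_mul] at hw0ef
    exact hw0ef
  have hmapeq : map (algebraMap (𝓞 L₀) (𝓞 L)) v0 = w0 := by
    rw [hw0eq, hew, pow_one]
  -- conclusion
  constructor
  · refine ⟨v0, ⟨hv0prime, hv0mem⟩, ?_⟩
    rintro v ⟨h1, h2⟩
    exact hv0uniq v h1 ((hmem_iff v).mpr h2)
  · intro v hv1 hv2
    have hveq : v = v0 := hv0uniq v hv1 ((hmem_iff v).mpr hv2)
    subst hveq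
    refine ⟨hev0, ?_, ?_⟩
    · rw [hmapeq]; exact hw0prime
    · rw [hmapeq]; exact hfw2
end

section
/- Let π = √3·ζ₃ and L = ℚ(π) = ℚ(ζ₁₂) with ring of integers O_L = ℤ[ζ₁₂]. Then the order R_sp = ℤ[π, 3·π^{-1}, π²/3] has index 3 in O_L. -/
open Polynomial Algebra

lemma ratsq (r : ℚ) (h : ∃ k : ℤ, (k:ℚ) = r^2) : ∃ m : ℤ, (m:ℚ) = r := by
  obtain ⟨k, hk⟩ := h
  have hint : IsIntegral ℤ r := by
    refine ⟨X^2 - C k, monic_X_pow_sub_C k (by norm_num), ?_⟩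
    rw [eval₂_sub, eval₂_pow, eval₂_X, eval₂_C, eq_intCast, hk]
    ring
  obtain ⟨m, hm⟩ := IsIntegrallyClosed.isIntegral_iff.mp hint
  exact ⟨m, hm⟩

lemma int4 {m u n : ℤ} (h : m^2 + u^2 = 4*n) : 2 ∣ m ∧ 2 ∣ u := by
  rcases Int.even_or_odd m with ⟨a,ha⟩|⟨a,ha⟩ <;>
    rcases Int.even_or_odd u with ⟨b,hb⟩|⟨b,hb⟩ <;> subst ha hb
  · exact ⟨⟨a, by ring⟩, ⟨b, by ring⟩⟩
  · exfalso
    have h4 : (4:ℤ) ∣ 1 := ⟨n - a^2 - b^2 - b, by linear_combination h⟩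
    norm_num at h4
  · exfalso
    have h4 : (4:ℤ) ∣ 1 := ⟨n - a^2 - a - b^2, by linear_combination h⟩
    norm_num at h4
  · exfalso
    have h4 : (4:ℤ) ∣ 2 := ⟨n - a^2 - a - b^2 - b, by linear_combination h⟩
    omega

lemma quadZ4 {p q : ℚ} (h1 : ∃ m:ℤ, (m:ℚ) = 2*p) (h2 : ∃ n:ℤ, (n:ℚ) = p^2+q^2) :
    (∃ m:ℤ, (m:ℚ) = p) ∧ (∃ m:ℤ, (m:ℚ) = q) := by
  obtain ⟨m, hm⟩ := h1
  obtain ⟨n, hn⟩ := h2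
  obtain ⟨u, hu⟩ := ratsq (2*q) ⟨4*n - m^2, by push_cast; linear_combination 4*hn - ((m:ℚ)+2*p)*hm⟩
  have key : m^2 + u^2 = 4*n := by
    have : ((m^2 + u^2 : ℤ):ℚ) = ((4*n : ℤ):ℚ) := by
      push_cast
      linear_combination ((m:ℚ)+2*p)*hm + ((u:ℚ)+2*q)*hu - 4*hn
    exact_mod_cast this
  obtain ⟨⟨a, ha⟩, ⟨b, hb⟩⟩ := int4 key
  subst ha hb
  constructor
  · exact ⟨a, by push_cast at hm ⊢; linarith⟩
  · exact ⟨b, by push_cast at hu ⊢; linarith⟩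

lemma quadZ3 {p q : ℚ} (h1 : ∃ m:ℤ, (m:ℚ) = 2*p - q) (h2 : ∃ n:ℤ, (n:ℚ) = p^2 - p*q + q^2) :
    (∃ m:ℤ, (m:ℚ) = p) ∧ (∃ m:ℤ, (m:ℚ) = q) := by
  obtain ⟨s, hs⟩ := h1
  obtain ⟨n, hn⟩ := h2
  obtain ⟨u, hu⟩ := ratsq (3*q) ⟨12*n - 3*s^2, by push_cast; linear_combination 12*hn - 3*((s:ℚ)+2*p-q)*hs⟩
  have hu2 : u^2 = 12*n - 3*s^2 := by
    have : ((u^2:ℤ):ℚ) = ((12*n - 3*s^2 : ℤ):ℚ) := by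
      push_cast
      linear_combination ((u:ℚ)+3*q)*hu + 3*((s:ℚ)+2*p-q)*hs - 12*hn
    exact_mod_cast this
  have h3u : (3:ℤ) ∣ u := by
    have : (3:ℤ) ∣ u^2 := ⟨4*n - s^2, by linear_combination hu2⟩
    exact Int.prime_three.dvd_of_dvd_pow this
  obtain ⟨v, hv⟩ := h3u
  subst hv
  have hq : (v:ℚ) = q := by push_cast at hu; linarith
  have hm : ((s + v : ℤ):ℚ) = 2*p := by push_cast; linarith
  set m := s + v with hmdef
  have key : m^2 = 4*n + 2*m*v - 4*v^2 := by
    have : ((m^2:ℤ):ℚ) = ((4*n + 2*m*v - 4*v^2 : ℤ):ℚ) := by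
      push_cast
      linear_combination ((m:ℚ)+2*p-2*q)*hm - 4*hn + (-2*(m:ℚ)+4*(v:ℚ)+4*q)*hq
    exact_mod_cast this
  have h2m : (2:ℤ) ∣ m := by
    exact Int.prime_two.dvd_of_dvd_pow (n := 2) ⟨2*n + m*v - 2*v^2, by linear_combination key⟩
  obtain ⟨t, ht⟩ := h2m
  refine ⟨⟨t, ?_⟩, ⟨v, hq⟩⟩
  rw [ht] at hm; push_cast at hm; linarith

/-- Let `π = √3·ζ₃` and `L = ℚ(π) = ℚ(ζ₁₂)`, whose ring of integers is `O_L = ℤ[ζ₁₂]`.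
Then the order `R_sp = ℤ[π, 3·π⁻¹, π²/3]` has (additive) index `3` in `O_L`.
(Here `√3 = ξ + ξ⁻¹` and `ζ₃ = ξ⁴` for `ξ = ζ₁₂`.) -/
theorem stmt13 (L : Type) [Field L] [Algebra ℚ L]
    (ξ : L) (hξ : IsPrimitiveRoot ξ 12)
    (hL : IntermediateField.adjoin ℚ ({ξ} : Set L) = ⊤)
    (π : L) (hπ : π = (ξ + ξ⁻¹) * ξ ^ 4) :
    integralClosure ℤ L = Algebra.adjoin ℤ ({ξ} : Set L) ∧
    AddSubgroup.relIndex
      ((Algebra.adjoin ℤ ({π, 3 * π⁻¹, π ^ 2 / 3} : Set L)).toSubring.toAddSubgroup)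
      ((integralClosure ℤ L).toSubring.toAddSubgroup) = 3 := by
  haveI : CharZero L := charZero_of_injective_algebraMap (algebraMap ℚ L).injective
  have hξ' : IsPrimitiveRoot ξ ((12:ℕ+):ℕ) := hξ
  have hξint : IsIntegral ℤ ξ := hξ.isIntegral (by norm_num)
  have hint : IsIntegral ℚ ξ := hξint.tower_top
  have halg : Algebra.adjoin ℚ ({ξ} : Set L) = ⊤ := by
    have h := IntermediateField.adjoin_simple_toSubalgebra_of_isAlgebraic hint.isAlgebraic
    rw [hL] at h
    exact (h.symm.trans (by rfl)).symm ▸ rfl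
  haveI hcyc : IsCyclotomicExtension {12} ℚ L := by
    rw [IsCyclotomicExtension.iff_adjoin_eq_top]
    refine ⟨fun n hn _ => ⟨ξ, by simpa [Set.mem_singleton_iff.1 hn] using hξ'⟩, ?_⟩
    rw [_root_.eq_top_iff, ← halg]
    exact Algebra.adjoin_mono (by rintro x rfl; exact ⟨12, rfl, by norm_num, hξ.pow_eq_one⟩)
  have hmin : minpoly ℚ ξ = cyclotomic 12 ℚ := by
    have h := (cyclotomic_eq_minpoly_rat (n := 12) (μ := ξ) hξ (by norm_num)).symm
    convert h using 2 <;> exact Subsingleton.elim _ _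
  set pb : PowerBasis ℚ L := hξ.powerBasis ℚ with hpb
  have hgen : pb.gen = ξ := by simp [hpb, IsPrimitiveRoot.powerBasis_gen]
  have hdim : pb.dim = 4 := by
    have h := pb.natDegree_minpoly
    rw [hgen, hmin, natDegree_cyclotomic] at h
    rw [← h]; decide
  -- key relations
  have h12 : ξ^12 = 1 := hξ.pow_eq_one
  have h6 : ξ^6 = -1 := by
    have hne : ξ^6 ≠ 1 := hξ.pow_ne_one_of_pos_of_lt (by norm_num) (by norm_num)
    have h0 : (ξ^6 - 1) * (ξ^6 + 1) = 0 := by linear_combination h12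
    rcases mul_eq_zero.1 h0 with h | h
    · exact absurd (by linear_combination h) hne
    · linear_combination h
  have h4 : ξ^4 = ξ^2 - 1 := by
    have hne : ξ^4 ≠ 1 := hξ.pow_ne_one_of_pos_of_lt (by norm_num) (by norm_num)
    have h0 : (ξ^2 + 1) * (ξ^4 - ξ^2 + 1) = 0 := by linear_combination h6
    rcases mul_eq_zero.1 h0 with h | h
    · exact absurd (by linear_combination ξ^2 * h - h) hne
    · linear_combination h
  -- the basis 1, ξ, ξ², ξ³
  let bas : Module.Basis (Fin 4) ℚ L := pb.basis.reindex (finCongr hdim)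
  have hB : ∀ i : Fin 4, bas i = ξ^(i:ℕ) := by
    intro i
    simp [bas, Module.Basis.reindex_apply, PowerBasis.coe_basis, hgen]
  -- the two algebra maps
  have hroot : ∀ k : ℕ, Nat.Coprime k 12 → aeval (ξ^k) (minpoly ℚ pb.gen) = 0 := by
    intro k hk
    have hprim : IsPrimitiveRoot (ξ^k) 12 := hξ.pow_of_coprime k hk
    have h := hprim.isRoot_cyclotomic (by norm_num)
    rw [hgen, hmin, aeval_def, eval₂_eq_eval_map, map_cyclotomic]
    exact h
  set σ : L →ₐ[ℚ] L := pb.lift (ξ^7) (hroot 7 (by norm_num)) with hσdef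
  set ρ : L →ₐ[ℚ] L := pb.lift (ξ^5) (hroot 5 (by norm_num)) with hρdef
  have hσξ : σ ξ = ξ^7 := by rw [← hgen]; exact pb.lift_gen _ _
  have hρξ : ρ ξ = ξ^5 := by rw [← hgen]; exact pb.lift_gen _ _
  have hσint : ∀ x : L, IsIntegral ℤ x → IsIntegral ℤ (σ x) :=
    fun x hx => hx.map σ.toRingHom.toIntAlgHom
  have hρint : ∀ x : L, IsIntegral ℤ x → IsIntegral ℤ (ρ x) :=
    fun x hx => hx.map ρ.toRingHom.toIntAlgHom
  -- rational elements that are integral are integers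
  have ratint : ∀ r : ℚ, IsIntegral ℤ (algebraMap ℚ L r) → ∃ m : ℤ, (m:ℚ) = r := by
    intro r hr
    have h : IsIntegral ℤ r := (isIntegral_algebraMap_iff (algebraMap ℚ L).injective).mp hr
    obtain ⟨m, hm⟩ := IsIntegrallyClosed.isIntegral_iff.mp h
    exact ⟨m, by simpa using hm⟩
  -- quadratic subfield arguments
  have sub3 : ∀ (p q : ℚ) (y : L), IsIntegral ℤ y →
      y = algebraMap ℚ L p + algebraMap ℚ L q * ξ^4 →
      (∃ m:ℤ, (m:ℚ) = p) ∧ (∃ m:ℤ, (m:ℚ) = q) := by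
    intro p q y hyint hy
    have hρy : ρ y = algebraMap ℚ L p + algebraMap ℚ L q * ξ^20 := by
      rw [hy, map_add, map_mul, AlgHom.commutes, AlgHom.commutes, map_pow, hρξ]; ring
    have h1 : y + ρ y = algebraMap ℚ L (2*p - q) := by
      rw [hρy, hy]
      simp only [map_sub, map_mul, map_ofNat]
      linear_combination (algebraMap ℚ L q * (ξ^16 + ξ^14 - ξ^10 - ξ^8 + ξ^4 + ξ^2 + 1)) * h4
    have h2 : y * ρ y = algebraMap ℚ L (p^2 - p*q + q^2) := by
      rw [hρy, hy]
      simp only [map_sub, map_add, map_mul, map_pow]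
      linear_combination ((algebraMap ℚ L q)^2 * (ξ^20 + ξ^18 - ξ^14 - ξ^12 + ξ^8 + ξ^6 - ξ^2 - 1)
        + (algebraMap ℚ L p * algebraMap ℚ L q) * (ξ^16 + ξ^14 - ξ^10 - ξ^8 + ξ^4 + ξ^2 + 1)) * h4
    exact quadZ3 (ratint _ (h1 ▸ hyint.add (hρint y hyint)))
      (ratint _ (h2 ▸ hyint.mul (hρint y hyint)))
  have sub4 : ∀ (p q : ℚ) (y : L), IsIntegral ℤ y →
      y = algebraMap ℚ L p + algebraMap ℚ L q * ξ^3 →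
      (∃ m:ℤ, (m:ℚ) = p) ∧ (∃ m:ℤ, (m:ℚ) = q) := by
    intro p q y hyint hy
    have hσy : σ y = algebraMap ℚ L p + algebraMap ℚ L q * ξ^21 := by
      rw [hy, map_add, map_mul, AlgHom.commutes, AlgHom.commutes, map_pow, hσξ]; ring
    have h1 : y + σ y = algebraMap ℚ L (2*p) := by
      rw [hσy, hy]
      simp only [map_mul, map_ofNat]
      linear_combination (algebraMap ℚ L q * (ξ^17 + ξ^15 - ξ^11 - ξ^9 + ξ^5 + ξ^3)) * h4
    have h2 : y * σ y = algebraMap ℚ L (p^2 + q^2) := by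
      rw [hσy, hy]
      simp only [map_add, map_mul, map_pow]
      linear_combination ((algebraMap ℚ L q)^2 * (ξ^20 + ξ^18 - ξ^14 - ξ^12 + ξ^8 + ξ^6 - ξ^2 - 1)
        + (algebraMap ℚ L p * algebraMap ℚ L q) * (ξ^17 + ξ^15 - ξ^11 - ξ^9 + ξ^5 + ξ^3)) * h4
    exact quadZ4 (ratint _ (h1 ▸ hyint.add (hσint y hyint)))
      (ratint _ (h2 ▸ hyint.mul (hσint y hyint)))
  -- representation of arbitrary elements
  have hrep : ∀ x : L, ∃ a b c d : ℚ, x = algebraMap ℚ L a + algebraMap ℚ L b * ξ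
      + algebraMap ℚ L c * ξ^2 + algebraMap ℚ L d * ξ^3 := by
    intro x
    have h := bas.sum_repr x
    rw [Fin.sum_univ_four] at h
    refine ⟨bas.repr x 0, bas.repr x 1, bas.repr x 2, bas.repr x 3, ?_⟩
    conv_lhs => rw [← h]
    simp only [hB, Algebra.smul_def, show ((0:Fin 4):ℕ) = 0 from rfl, show ((1:Fin 4):ℕ) = 1 from rfl, show ((2:Fin 4):ℕ) = 2 from rfl, show ((3:Fin 4):ℕ) = 3 from rfl]
    ring
  -- integral elements have integer coordinates
  have intCoords : ∀ x : L, IsIntegral ℤ x → ∃ a b c d : ℤ,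
      x = (a:L) + (b:L)*ξ + (c:L)*ξ^2 + (d:L)*ξ^3 := by
    intro x hxint
    obtain ⟨a, b, c, d, hx⟩ := hrep x
    have hσx : σ x = algebraMap ℚ L a + algebraMap ℚ L b * ξ^7
        + algebraMap ℚ L c * ξ^14 + algebraMap ℚ L d * ξ^21 := by
      rw [hx]
      simp only [map_add, map_mul, AlgHom.commutes, map_pow, hσξ]
      ring
    have hρx : ρ x = algebraMap ℚ L a + algebraMap ℚ L b * ξ^5
        + algebraMap ℚ L c * ξ^10 + algebraMap ℚ L d * ξ^15 := by
      rw [hx]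
      simp only [map_add, map_mul, AlgHom.commutes, map_pow, hρξ]
      ring
    have ht1 : x + σ x = algebraMap ℚ L (2*a+2*c) + algebraMap ℚ L (2*c) * ξ^4 := by
      rw [hσx, hx]
      simp only [map_add, map_mul, map_ofNat]
      linear_combination (algebraMap ℚ L d * (ξ^17 + ξ^15 - ξ^11 - ξ^9 + ξ^5 + ξ^3)
        + algebraMap ℚ L c * (ξ^10 + ξ^8 - ξ^4 - ξ^2 - 2)
        + algebraMap ℚ L b * (ξ^3 + ξ)) * h4
    have ht2 : (x - σ x) * ξ^3 = algebraMap ℚ L (-(2*d)) + algebraMap ℚ L (2*b) * ξ^4 := by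
      rw [hσx, hx]
      simp only [map_add, map_mul, map_neg, map_ofNat]
      linear_combination (algebraMap ℚ L d * (-ξ^20 - ξ^18 + ξ^14 + ξ^12 - ξ^8 - ξ^6 + 2*ξ^2 + 2)
        + algebraMap ℚ L c * (-ξ^13 - ξ^11 + ξ^7 + ξ^5)
        + algebraMap ℚ L b * (-ξ^6 - ξ^4)) * h4
    have ht3 : x + ρ x = algebraMap ℚ L (2*a+c) + algebraMap ℚ L (b+2*d) * ξ^3 := by
      rw [hρx, hx]
      simp only [map_add, map_mul, map_ofNat]
      linear_combination (algebraMap ℚ L d * (ξ^11 + ξ^9 - ξ^5 - ξ^3)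
        + algebraMap ℚ L c * (ξ^6 + ξ^4 - 1)
        + algebraMap ℚ L b * ξ) * h4
    have ht4 : x * ξ^4 + ρ x * ξ^8 = algebraMap ℚ L (-(a+2*c)) + algebraMap ℚ L (b-d) * ξ^3 := by
      rw [hρx, hx]
      simp only [map_add, map_mul, map_sub, map_neg, map_ofNat]
      linear_combination (algebraMap ℚ L d * (ξ^19 + ξ^17 - ξ^13 - ξ^11 + ξ^7 + ξ^5 + ξ^3)
        + algebraMap ℚ L c * (ξ^14 + ξ^12 - ξ^8 - ξ^6 + 2*ξ^2 + 2)
        + algebraMap ℚ L b * (ξ^9 + ξ^7 - ξ^3)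
        + algebraMap ℚ L a * (ξ^4 + ξ^2 + 1)) * h4
    obtain ⟨⟨m1, hm1⟩, ⟨m2, hm2⟩⟩ :=
      sub3 _ _ _ (hxint.add (hσint x hxint)) ht1
    obtain ⟨⟨n1, hn1⟩, ⟨n2, hn2⟩⟩ :=
      sub3 _ _ _ ((hxint.sub (hσint x hxint)).mul (hξint.pow 3)) ht2
    obtain ⟨⟨k1, hk1⟩, ⟨k2, hk2⟩⟩ :=
      sub4 _ _ _ (hxint.add (hρint x hxint)) ht3
    obtain ⟨⟨l1, hl1⟩, ⟨l2, hl2⟩⟩ :=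
      sub4 _ _ _ ((hxint.mul (hξint.pow 4)).add ((hρint x hxint).mul (hξint.pow 8))) ht4
    have hia : ((2*k1 + l1 - m1 + m2 : ℤ):ℚ) = a := by push_cast; linarith
    have hib : ((k2 + 2*l2 - n2 : ℤ):ℚ) = b := by push_cast; linarith
    have hic : ((-2*l1 - k1 - m2 : ℤ):ℚ) = c := by push_cast; linarith
    have hid : ((k2 - l2 + n1 : ℤ):ℚ) = d := by push_cast; linarith
    refine ⟨2*k1 + l1 - m1 + m2, k2 + 2*l2 - n2, -2*l1 - k1 - m2, k2 - l2 + n1, ?_⟩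
    rw [hx, ← hia, ← hib, ← hic, ← hid]
    simp only [map_intCast]
  -- integer-coordinate elements lie in ℤ[ξ]
  have hadj_sub : ∀ x:L, (∃ a b c d : ℤ, x = (a:L) + (b:L)*ξ + (c:L)*ξ^2 + (d:L)*ξ^3) →
      x ∈ Algebra.adjoin ℤ ({ξ}:Set L) := by
    rintro x ⟨a,b,c,d,rfl⟩
    have hmem : ξ ∈ Algebra.adjoin ℤ ({ξ}:Set L) := Algebra.subset_adjoin rfl
    exact add_mem (add_mem (add_mem (intCast_mem _ a) (mul_mem (intCast_mem _ b) hmem))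
      (mul_mem (intCast_mem _ c) (pow_mem hmem 2))) (mul_mem (intCast_mem _ d) (pow_mem hmem 3))
  have part1 : integralClosure ℤ L = Algebra.adjoin ℤ ({ξ}:Set L) := by
    apply le_antisymm
    · intro x hx
      exact hadj_sub x (intCoords x hx)
    · exact adjoin_le_integralClosure hξint
  refine ⟨part1, ?_⟩
  -- Part 2: the index computation
  have hξ0 : ξ ≠ 0 := by
    intro h
    rw [h] at h12
    norm_num at h12
  have hinvξ : ξ⁻¹ = ξ - ξ^3 := by
    have h : ξ * (ξ - ξ^3) = 1 := by linear_combination -h4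
    exact inv_eq_of_mul_eq_one_right h
  have hπ1 : π = 2*ξ^3 - ξ := by
    rw [hπ, hinvξ]
    linear_combination (ξ - ξ^3) * h4
  have hmul3 : π * (-(ξ^3) - ξ) = 3 := by
    rw [hπ1]
    linear_combination -2*h6 - h4
  have hπ0 : π ≠ 0 := by
    intro h
    rw [h, zero_mul] at hmul3
    norm_num at hmul3
  have hg3 : 3*π⁻¹ = -(ξ^3) - ξ := by
    calc 3*π⁻¹ = π⁻¹ * (π * (-(ξ^3) - ξ)) := by rw [hmul3]; ring
    _ = -(ξ^3) - ξ := by rw [← mul_assoc, inv_mul_cancel₀ hπ0, one_mul]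
  have h3L : (3:L) ≠ 0 := by norm_num
  have hsq : π^2 = -3*ξ^2 := by
    rw [hπ1]
    linear_combination 4*h6 - 4*h4
  have hg2 : π^2/3 = -ξ^2 := by
    rw [hsq, div_eq_iff h3L]; ring
  -- description of the order
  set S := Algebra.adjoin ℤ ({π, 3 * π⁻¹, π ^ 2 / 3} : Set L) with hSdef
  set Q : L → Prop := fun x => ∃ a b c d : ℤ,
    x = (a:L) + (b:L)*(2*ξ^3 - ξ) + (c:L)*ξ^2 + (d:L)*(ξ^3 + ξ) with hQdef
  have Qg1 : ∀ x, Q x → Q (x*(2*ξ^3 - ξ)) := by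
    rintro x ⟨a,b,c,d,rfl⟩
    refine ⟨-3*d, a+c, -3*b, -c, ?_⟩
    push_cast
    linear_combination (4*(b:L)*ξ^2 + (d:L)*(2*ξ^2+3) + 2*(c:L)*ξ) * h4
  have Qg2 : ∀ x, Q x → Q (x*ξ^2) := by
    rintro x ⟨a,b,c,d,rfl⟩
    refine ⟨-c, b+d, a+c, -b, ?_⟩
    push_cast
    linear_combination ((2*(b:L)+(d:L))*ξ + (c:L)) * h4
  have Qg3 : ∀ x, Q x → Q (x*(ξ^3 + ξ)) := by
    rintro x ⟨a,b,c,d,rfl⟩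
    refine ⟨-3*b-3*d, c, 3*d, a, ?_⟩
    push_cast
    linear_combination ((2*(b:L)+(d:L))*ξ^2 + (c:L)*ξ + 3*(b:L)+3*(d:L)) * h4
  have Qsmul : ∀ (n:ℤ) x, Q x → Q ((n:L)*x) := by
    rintro n x ⟨a,b,c,d,rfl⟩
    exact ⟨n*a, n*b, n*c, n*d, by push_cast; ring⟩
  have Qadd : ∀ x y, Q x → Q y → Q (x+y) := by
    rintro x y ⟨a,b,c,d,rfl⟩ ⟨a',b',c',d',rfl⟩
    exact ⟨a+a', b+b', c+c', d+d', by push_cast; ring⟩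
  have Qmul : ∀ x y, Q x → Q y → Q (x*y) := by
    rintro x y hx ⟨a,b,c,d,rfl⟩
    have h : x * ((a:L) + (b:L)*(2*ξ^3 - ξ) + (c:L)*ξ^2 + (d:L)*(ξ^3 + ξ))
        = (a:L)*x + (b:L)*(x*(2*ξ^3 - ξ)) + (c:L)*(x*ξ^2) + (d:L)*(x*(ξ^3 + ξ)) := by ring
    rw [h]
    exact Qadd _ _ (Qadd _ _ (Qadd _ _ (Qsmul a x hx) (Qsmul b _ (Qg1 x hx)))
      (Qsmul c _ (Qg2 x hx))) (Qsmul d _ (Qg3 x hx))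
  have hSQ : ∀ x : L, x ∈ S ↔ Q x := by
    intro x
    constructor
    · intro hx
      refine Algebra.adjoin_induction (fun y hy => ?_) (fun r => ?_)
        (fun y z _ _ hy hz => Qadd y z hy hz) (fun y z _ _ hy hz => Qmul y z hy hz) hx
      · rcases hy with rfl | rfl | rfl
        · exact ⟨0, 1, 0, 0, by rw [hπ1]; push_cast; ring⟩
        · exact ⟨0, 0, 0, -1, by rw [hg3]; push_cast; ring⟩
        · exact ⟨0, 0, -1, 0, by rw [hg2]; push_cast; ring⟩
      · exact ⟨r, 0, 0, 0, by rw [eq_intCast (algebraMap ℤ L) r]; push_cast; ring⟩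
    · rintro ⟨a,b,c,d,rfl⟩
      have hπS : π ∈ S := Algebra.subset_adjoin (by simp)
      have hg1S : (2*ξ^3 - ξ) ∈ S := hπ1 ▸ hπS
      have h2S : ξ^2 ∈ S := by
        have h : ξ^2 = -(π^2/3) := by rw [hg2]; ring
        rw [h]
        exact neg_mem (Algebra.subset_adjoin (by simp))
      have h3S : (ξ^3 + ξ) ∈ S := by
        have h : ξ^3 + ξ = -(3*π⁻¹) := by rw [hg3]; ring
        rw [h]
        exact neg_mem (Algebra.subset_adjoin (by simp))
      exact add_mem (add_mem (add_mem (intCast_mem _ a) (mul_mem (intCast_mem _ b) hg1S))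
        (mul_mem (intCast_mem _ c) h2S)) (mul_mem (intCast_mem _ d) h3S)
  -- coordinate functional values
  have reprval : ∀ a b c d : ℚ,
      bas.repr (algebraMap ℚ L a + algebraMap ℚ L b * ξ + algebraMap ℚ L c * ξ^2
        + algebraMap ℚ L d * ξ^3) 1 = b ∧
      bas.repr (algebraMap ℚ L a + algebraMap ℚ L b * ξ + algebraMap ℚ L c * ξ^2
        + algebraMap ℚ L d * ξ^3) 3 = d := by
    intro a b c d
    have h : algebraMap ℚ L a + algebraMap ℚ L b * ξ + algebraMap ℚ L c * ξ^2
        + algebraMap ℚ L d * ξ^3 = a • bas 0 + b • bas 1 + c • bas 2 + d • bas 3 := by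
      simp only [hB, Algebra.smul_def, show ((0:Fin 4):ℕ) = 0 from rfl, show ((1:Fin 4):ℕ) = 1 from rfl, show ((2:Fin 4):ℕ) = 2 from rfl, show ((3:Fin 4):ℕ) = 3 from rfl]
      ring
    rw [h]
    simp [Finsupp.single_apply]
  set ν : L → ℤ := fun z => (bas.repr z 1 - bas.repr z 3).num with hνdef
  have νval : ∀ (z:L) (a b c d : ℤ), z = (a:L) + (b:L)*ξ + (c:L)*ξ^2 + (d:L)*ξ^3 →
      ν z = b - d := by
    intro z a b c d hz
    have hz' : z = algebraMap ℚ L ((a:ℤ):ℚ) + algebraMap ℚ L ((b:ℤ):ℚ) * ξ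
        + algebraMap ℚ L ((c:ℤ):ℚ) * ξ^2 + algebraMap ℚ L ((d:ℤ):ℚ) * ξ^3 := by
      rw [hz]; simp only [map_intCast]
    obtain ⟨hb, hd⟩ := reprval ((a:ℤ):ℚ) ((b:ℤ):ℚ) ((c:ℤ):ℚ) ((d:ℤ):ℚ)
    show (bas.repr z 1 - bas.repr z 3).num = b - d
    simp only [← hz'] at hb hd
    rw [hb, hd]
    rw [show ((b:ℚ) - (d:ℚ)) = ((b - d : ℤ):ℚ) by push_cast; ring]
    exact Rat.num_intCast _
  -- the additive group homomorphism to ZMod 3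
  set Kgrp := ((integralClosure ℤ L).toSubring.toAddSubgroup) with hKdef
  have hKmem : ∀ z : L, z ∈ Kgrp ↔ IsIntegral ℤ z := by
    intro z
    rfl
  have hξK : ξ ∈ Kgrp := (hKmem ξ).mpr hξint
  set g : Kgrp →+ ZMod 3 :=
    { toFun := fun z => ((ν z : ℤ) : ZMod 3)
      map_zero' := by
        have h0 : ν 0 = 0 := νval 0 0 0 0 0 (by push_cast; ring)
        simp [h0]
      map_add' := by
        rintro ⟨z, hz⟩ ⟨w, hw⟩
        obtain ⟨a,b,c,d,hzc⟩ := intCoords z ((hKmem z).mp hz)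
        obtain ⟨a',b',c',d',hwc⟩ := intCoords w ((hKmem w).mp hw)
        have hzw : z + w = ((a+a' : ℤ):L) + ((b+b' : ℤ):L)*ξ + ((c+c' : ℤ):L)*ξ^2
            + ((d+d' : ℤ):L)*ξ^3 := by
          rw [hzc, hwc]; push_cast; ring
        simp only [AddSubgroup.coe_add]
        rw [νval _ _ _ _ _ hzw, νval _ _ _ _ _ hzc, νval _ _ _ _ _ hwc]
        push_cast
        ring } with hgdef
  have gval : ∀ (z : Kgrp) (a b c d : ℤ), (z:L) = (a:L) + (b:L)*ξ + (c:L)*ξ^2 + (d:L)*ξ^3 →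
      g z = ((b - d : ℤ) : ZMod 3) := by
    intro z a b c d hz
    simp only [hgdef, AddMonoidHom.coe_mk, ZeroHom.coe_mk]
    rw [νval _ _ _ _ _ hz]
  have hgξ : g ⟨ξ, hξK⟩ = 1 := by
    rw [gval ⟨ξ, hξK⟩ 0 1 0 0 (by push_cast; ring)]
    norm_num
  have hsurj : Function.Surjective g := by
    intro w
    refine ⟨w.val • ⟨ξ, hξK⟩, ?_⟩
    rw [map_nsmul, hgξ]
    simp [nsmul_eq_mul, ZMod.natCast_val, ZMod.cast_id]
  have hker : g.ker = ((Algebra.adjoin ℤ ({π, 3 * π⁻¹, π ^ 2 / 3} : Set L)).toSubring.toAddSubgroup).addSubgroupOf Kgrp := by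
    ext z
    rw [AddMonoidHom.mem_ker, AddSubgroup.mem_addSubgroupOf]
    have hmemS : ((z:L) ∈ ((Algebra.adjoin ℤ ({π, 3 * π⁻¹, π ^ 2 / 3} : Set L)).toSubring.toAddSubgroup)) ↔ (z:L) ∈ S := Iff.rfl
    rw [hmemS, hSQ]
    constructor
    · intro hg0
      obtain ⟨a,b,c,d,hzc⟩ := intCoords (z:L) ((hKmem _).mp z.2)
      rw [gval z a b c d hzc] at hg0
      have h3 : (3:ℤ) ∣ (b - d) := by
        rwa [ZMod.intCast_zmod_eq_zero_iff_dvd] at hg0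
      obtain ⟨k, hk⟩ := h3
      refine ⟨a, -k, c, b - k, ?_⟩
      have hkL : (d:L) = (b:L) - 3*(k:L) := by
        have : d = b - 3*k := by omega
        rw [this]; push_cast; ring
      rw [hzc, hkL]
      push_cast
      ring
    · rintro ⟨a,b,c,d,hzc⟩
      have hzc' : (z:L) = ((a:ℤ):L) + (((-b+d) : ℤ):L)*ξ + ((c:ℤ):L)*ξ^2
          + (((2*b+d) : ℤ):L)*ξ^3 := by
        rw [hzc]; push_cast; ring
      rw [gval z _ _ _ _ hzc']
      have h : ((-b+d) - (2*b+d) : ℤ) = 3 * (-b) := by ring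
      rw [h]
      rw [ZMod.intCast_zmod_eq_zero_iff_dvd]
      exact ⟨-b, rfl⟩
  -- conclude
  show AddSubgroup.relIndex _ Kgrp = 3
  rw [AddSubgroup.relIndex, ← hker, AddSubgroup.index_ker]
  have hr : g.range = ⊤ := AddMonoidHom.range_eq_top.mpr hsurj
  have hcard : Nat.card (⊤ : AddSubgroup (ZMod 3)) = Nat.card (ZMod 3) :=
    Nat.card_congr AddSubgroup.topEquiv.toEquiv
  rw [hr, hcard, Nat.card_zmod]
end
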